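/- If a finite loopless directed graph D=(V,A) with n vertices is a central interval catch digraph (CICD), then there is an enumeration v_1,…,v_n of V such that: (a) for all indices i<j<k, if (v_i,v_k)∈A then (v_i,v_j)∈A, and if (v_k,v_i)∈A then (v_k,v_j)∈A; and (b) for all i<j, either i_1≤j_1 or i_2≤j_2, where for each index m, m_1 denotes the least index such that m_1=m or (v_m,v_{m_1})∈A, and m_2 denotes the greatest index such that m_2=m or (v_m,v_{m_2})∈A. -/

import Mathlib

variable {V : Type*}

/-- An interval catch digraph representation: each vertex `u` gets an interval
`[a u, b u]` and a point `p u` inside it, and for distinct `u, v` there is an arc from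
`u` to `v` iff `p v ∈ [a u, b u]`. -/
def IsICDRep (D : V → V → Prop) (a b p : V → ℝ) : Prop :=
  (∀ u, a u ≤ b u) ∧ (∀ u, p u ∈ Set.Icc (a u) (b u)) ∧
    ∀ u v : V, u ≠ v → (D u v ↔ p v ∈ Set.Icc (a u) (b u))

/-- An interval catch digraph. -/
def IsICD (D : V → V → Prop) : Prop := ∃ a b p : V → ℝ, IsICDRep D a b p

/-- A central interval catch digraph: an ICD representation where every point is the
center of its interval. -/
def IsCICD (D : V → V → Prop) : Prop :=
  ∃ a b : V → ℝ, IsICDRep D a b (fun u => (a u + b u) / 2)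

/-- If a finite loopless digraph `D` with `n` vertices is a CICD, then its vertices can
be enumerated `v 0, …, v (n-1)` so that (a) for `i < j < k`, an arc `(v i, v k)` forces
the arc `(v i, v j)`, and an arc `(v k, v i)` forces the arc `(v k, v j)`; and (b) for
`i < j`, either `i₁ ≤ j₁` or `i₂ ≤ j₂`, where `m₁` (resp. `m₂`) is the least
(resp. greatest) index equal to `m` or joined from `v m` by an arc. -/
theorem cicd_enumeration_condition [Fintype V] (D : V → V → Prop)
    (hloop : ∀ u, ¬ D u u) (n : ℕ) (hn : Fintype.card V = n) (hD : IsCICD D) :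
    ∃ v : Fin n → V, Function.Bijective v ∧
      (∀ i j k : Fin n, i < j → j < k →
        (D (v i) (v k) → D (v i) (v j)) ∧ (D (v k) (v i) → D (v k) (v j))) ∧
      (∀ i j i₁ i₂ j₁ j₂ : Fin n, i < j →
        (i₁ = i ∨ D (v i) (v i₁)) → (∀ k : Fin n, (k = i ∨ D (v i) (v k)) → i₁ ≤ k) →
        (i₂ = i ∨ D (v i) (v i₂)) → (∀ k : Fin n, (k = i ∨ D (v i) (v k)) → k ≤ i₂) →
        (j₁ = j ∨ D (v j) (v j₁)) → (∀ k : Fin n, (k = j ∨ D (v j) (v k)) → j₁ ≤ k) →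
        (j₂ = j ∨ D (v j) (v j₂)) → (∀ k : Fin n, (k = j ∨ D (v j) (v k)) → k ≤ j₂) →
        (i₁ ≤ j₁ ∨ i₂ ≤ j₂)) := by
  obtain ⟨a, b, hab, hmem, harc⟩ := hD
  set p : V → ℝ := fun u => (a u + b u) / 2 with hp
  have e : V ≃ Fin n := Fintype.equivFinOfCardEq hn
  set f : Fin n → ℝ := fun i => p (e.symm i) with hf
  set σ := Tuple.sort f with hσ
  set v : Fin n → V := fun i => e.symm (σ i) with hv
  have hbij : Function.Bijective v :=
    (e.symm.bijective).comp σ.bijective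
  have hinj : Function.Injective v := hbij.injective
  have hmono : Monotone (fun i => p (v i)) := by
    have := Tuple.monotone_sort f
    exact this
  -- membership lemma: p (v k) ∈ I_{v m} ↔ (k = m ∨ D (v m) (v k))
  have hS : ∀ m k : Fin n, (k = m ∨ D (v m) (v k)) ↔
      p (v k) ∈ Set.Icc (a (v m)) (b (v m)) := by
    intro m k
    by_cases hkm : k = m
    · subst hkm
      simp [hloop (v k), hmem (v k)]
    · have hne : v m ≠ v k := fun h => hkm (hinj h.symm)
      constructor
      · rintro (h | h)
        · exact absurd h hkm
        · exact (harc _ _ hne).1 h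
      · intro h
        exact Or.inr ((harc _ _ hne).2 h)
  refine ⟨v, hbij, ?_, ?_⟩
  · intro i j k hij hjk
    have hne_ij : v i ≠ v j := fun h => (ne_of_lt hij) (hinj h)
    have hne_kj : v k ≠ v j := fun h => (ne_of_gt hjk) (hinj h)
    constructor
    · intro hD'
      have hk : p (v k) ∈ Set.Icc (a (v i)) (b (v i)) :=
        (hS i k).1 (Or.inr hD')
      have : p (v j) ∈ Set.Icc (a (v i)) (b (v i)) := by
        constructor
        · exact le_trans (hmem (v i)).1 (hmono hij.le)
        · exact le_trans (hmono hjk.le) hk.2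
      exact (harc _ _ hne_ij).2 this
    · intro hD'
      have hi : p (v i) ∈ Set.Icc (a (v k)) (b (v k)) :=
        (hS k i).1 (Or.inr hD')
      have : p (v j) ∈ Set.Icc (a (v k)) (b (v k)) := by
        constructor
        · exact le_trans hi.1 (hmono hij.le)
        · exact le_trans (hmono hjk.le) (hmem (v k)).2
      exact (harc _ _ hne_kj).2 this
  · intro i j i₁ i₂ j₁ j₂ hij hi1 hi1min hi2 hi2max hj1 hj1min hj2 hj2max
    by_contra hcon
    push_neg at hcon
    obtain ⟨h1, h2⟩ := hcon
    -- h1 : j₁ < i₁, h2 : j₂ < i₂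
    have hi1i : i₁ ≤ i := hi1min i (Or.inl rfl)
    have hii2 : i ≤ i₂ := hi2max i (Or.inl rfl)
    have hj1j : j₁ ≤ j := hj1min j (Or.inl rfl)
    have hjj2 : j ≤ j₂ := hj2max j (Or.inl rfl)
    -- p (v i₂) > b (v j)
    have hj2i2 : j < i₂ := lt_of_le_of_lt hjj2 h2
    have hi2notSj : ¬ (i₂ = j ∨ D (v j) (v i₂)) := by
      intro h
      exact absurd (hj2max i₂ h) (not_le.mpr h2)
    have hi2a : a (v j) ≤ p (v i₂) :=
      le_trans (hmem (v j)).1 (hmono hj2i2.le)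
    have hi2b : b (v j) < p (v i₂) := by
      by_contra hle
      push_neg at hle
      exact hi2notSj ((hS j i₂).2 ⟨hi2a, hle⟩)
    have hi2ub : p (v i₂) ≤ b (v i) := ((hS i i₂).1 hi2).2
    -- p (v j₁) < a (v i)
    have hj1i : j₁ < i := lt_of_lt_of_le h1 hi1i
    have hj1notSi : ¬ (j₁ = i ∨ D (v i) (v j₁)) := by
      intro h
      exact absurd (hi1min j₁ h) (not_le.mpr h1)
    have hj1b : p (v j₁) ≤ b (v i) :=
      le_trans (hmono hj1i.le) (hmem (v i)).2
    have hj1a : p (v j₁) < a (v i) := by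
      by_contra hle
      push_neg at hle
      exact hj1notSi ((hS i j₁).2 ⟨hle, hj1b⟩)
    have hj1lb : a (v j) ≤ p (v j₁) := ((hS j j₁).1 hj1).1
    -- centers are monotone: p (v i) ≤ p (v j)
    have hc : p (v i) ≤ p (v j) := hmono hij.le
    have hpi : p (v i) = (a (v i) + b (v i)) / 2 := rfl
    have hpj : p (v j) = (a (v j) + b (v j)) / 2 := rfl
    linarith
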